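/- arXiv:1409.4730 — 3 statements merged into one kernel-verified Lean document; each statement's English description precedes it below -/
import Mathlib

section
/- Let A be an MV-algebra satisfying the identity 2x² = (2x)². If x ∈ A satisfies x ≤ ¬x, then nx ≤ ¬x for every natural number n. Hence the radical of A equals {x ∈ A : x ≤ ¬x}. -/
/-- An MV-algebra `(A, ⊕, ¬, 0)`. -/
class MV (A : Type*) where
  op : A → A → A
  neg : A → A
  zero : A
  op_assoc : ∀ x y z : A, op (op x y) z = op x (op y z)
  op_comm : ∀ x y : A, op x y = op y x
  op_zero : ∀ x : A, op x zero = x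
  neg_neg : ∀ x : A, neg (neg x) = x
  op_neg_zero : ∀ x : A, op x (neg zero) = neg zero
  mv6 : ∀ x y : A, op (neg (op (neg x) y)) y = op (neg (op (neg y) x)) x

namespace MV

variable {A : Type*} [MV A]

/-- `1 := ¬0`. -/
def one : A := neg zero

/-- `x ⊙ y := ¬(¬x ⊕ ¬y)`. -/
def odot (x y : A) : A := neg (op (neg x) (neg y))

/-- `sup(x,y) := (x ⊙ ¬y) ⊕ y`. -/
def ssup (x y : A) : A := op (odot x (neg y)) y

/-- `inf(x,y) := (x ⊕ ¬y) ⊙ y`. -/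
def sinf (x y : A) : A := odot (op x (neg y)) y

/-- `x ≤ y` iff `¬x ⊕ y = 1`. -/
def le (x y : A) : Prop := op (neg x) y = one

/-- `x ≤ y` iff `inf(x,y) = x`. -/
def leInf (x y : A) : Prop := sinf x y = x

/-- `n`-fold sum `nx = x ⊕ ⋯ ⊕ x`. -/
def nsm : ℕ → A → A
  | 0, _ => zero
  | n + 1, x => op x (nsm n x)

/-- `x² := x ⊙ x`. -/
def sq (x : A) : A := odot x x

end MV

namespace MV

variable {A : Type*} [MV A]

/-- An ideal of an MV-algebra: contains `0`, downward closed, closed under `⊕`. -/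
def IsIdeal (I : Set A) : Prop :=
  (zero : A) ∈ I ∧ (∀ x ∈ I, ∀ y : A, leInf y x → y ∈ I) ∧
    (∀ x ∈ I, ∀ y ∈ I, op x y ∈ I)

/-- A maximal ideal: a proper ideal maximal among proper ideals. -/
def IsMaximalIdeal (I : Set A) : Prop :=
  IsIdeal I ∧ I ≠ Set.univ ∧ ∀ J : Set A, IsIdeal J → J ≠ Set.univ → I ⊆ J → J = I

/-- The radical: intersection of all maximal ideals. -/
def rad (A : Type*) [MV A] : Set A := ⋂₀ {I : Set A | IsMaximalIdeal I}

end MV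

namespace MV

variable {A : Type*} [MV A]

instance : Std.Associative (α := A) op := ⟨op_assoc⟩
instance : Std.Commutative (α := A) op := ⟨op_comm⟩

lemma zero_op (x : A) : op zero x = x := by rw [op_comm]; exact op_zero x
lemma neg_one : neg (one : A) = zero := neg_neg zero
lemma op_one (x : A) : op x one = one := op_neg_zero x
lemma one_op (x : A) : op one x = one := by rw [op_comm]; exact op_neg_zero x

lemma neg_op_self (x : A) : op (neg x) x = one := by
  have h := mv6 (one : A) x
  rw [neg_one, zero_op, op_one] at h
  exact h

lemma op_neg_self (x : A) : op x (neg x) = one := by rw [op_comm]; exact neg_op_self x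

lemma neg_odot (a b : A) : neg (odot a b) = op (neg a) (neg b) := neg_neg _

lemma odot_comm (a b : A) : odot a b = odot b a := by unfold odot; rw [op_comm]

lemma odot_assoc (a b c : A) : odot (odot a b) c = odot a (odot b c) := by
  unfold odot; rw [neg_neg, neg_neg, op_assoc]

lemma odot_zero (a : A) : odot a zero = zero := by
  unfold odot
  rw [show (neg zero : A) = one from rfl, op_one, neg_one]

lemma odot_one (a : A) : odot a one = a := by
  unfold odot
  rw [neg_one, op_zero, neg_neg]

lemma odot_neg_self (a : A) : odot a (neg a) = zero := by
  unfold odot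
  rw [neg_neg, neg_op_self, neg_one]

lemma MVle_refl (a : A) : le a a := neg_op_self a

lemma le_one' (a : A) : le a one := op_one (neg a)

lemma zero_le' (a : A) : le zero a := by
  show op (neg zero) a = one
  rw [show (neg zero : A) = one from rfl]
  exact one_op a

lemma le_op_left (a b : A) : le a (op a b) := by
  show op (neg a) (op a b) = one
  rw [← op_assoc, neg_op_self, one_op]

lemma le_op_right (a b : A) : le a (op b a) := by
  rw [op_comm b a]; exact le_op_left a b

lemma ssup_comm (a b : A) : ssup a b = ssup b a := by
  unfold ssup odot
  rw [neg_neg b, neg_neg a]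
  exact mv6 a b

lemma ssup_eq_of_le {a b : A} (h : le a b) : ssup a b = b := by
  unfold ssup odot
  rw [neg_neg b]
  have h' : op (neg a) b = one := h
  rw [h', neg_one, zero_op]

lemma rep_of_le {a b : A} (h : le a b) : op (odot b (neg a)) a = b := by
  have h1 : ssup b a = ssup a b := ssup_comm b a
  rw [ssup_eq_of_le h] at h1
  exact h1

lemma MVle_trans {a b c : A} (h1 : le a b) (h2 : le b c) : le a c := by
  obtain ⟨p, hp⟩ : ∃ p, op p a = b := ⟨_, rep_of_le h1⟩
  obtain ⟨q, hq⟩ : ∃ q, op q b = c := ⟨_, rep_of_le h2⟩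
  show op (neg a) c = one
  rw [← hq, ← hp]
  have : op (neg a) (op q (op p a)) = op q (op p (op (neg a) a)) := by ac_rfl
  rw [this, neg_op_self, op_one, op_one]

lemma MVle_antisymm {a b : A} (h1 : le a b) (h2 : le b a) : a = b := by
  have e := rep_of_le h2
  have hz : odot a (neg b) = zero := by
    show neg (op (neg a) (neg (neg b))) = zero
    rw [neg_neg]
    have h1' : op (neg a) b = one := h1
    rw [h1', neg_one]
  rw [hz, zero_op] at e
  exact e.symm

lemma op_le_op_right {a b : A} (h : le a b) (c : A) : le (op a c) (op b c) := by
  obtain ⟨p, hp⟩ : ∃ p, op p a = b := ⟨_, rep_of_le h⟩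
  show op (neg (op a c)) (op b c) = one
  rw [← hp]
  have : op (neg (op a c)) (op (op p a) c) = op p (op (neg (op a c)) (op a c)) := by ac_rfl
  rw [this, neg_op_self, op_one]

lemma op_le_op_left {a b : A} (h : le a b) (c : A) : le (op c a) (op c b) := by
  rw [op_comm c a, op_comm c b]; exact op_le_op_right h c

lemma op_le_op {a b c d : A} (h1 : le a b) (h2 : le c d) : le (op a c) (op b d) :=
  MVle_trans (op_le_op_right h1 c) (op_le_op_left h2 b)

lemma neg_le_neg {a b : A} (h : le a b) : le (neg b) (neg a) := by
  obtain ⟨p, hp⟩ : ∃ p, op p a = b := ⟨_, rep_of_le h⟩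
  show op (neg (neg b)) (neg a) = one
  rw [neg_neg, ← hp]
  have : op (op p a) (neg a) = op p (op a (neg a)) := by ac_rfl
  rw [this, op_neg_self, op_one]

lemma le_iff_odot {a b : A} : le a b ↔ odot a (neg b) = zero := by
  constructor
  · intro h
    show neg (op (neg a) (neg (neg b))) = zero
    rw [neg_neg]
    have h' : op (neg a) b = one := h
    rw [h', neg_one]
  · intro h
    have : neg (odot a (neg b)) = neg zero := by rw [h]
    rw [neg_odot, neg_neg] at this
    exact this

lemma odot_le_left (a b : A) : le (odot a b) a := by
  show op (neg (odot a b)) a = one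
  rw [neg_odot]
  have : op (op (neg a) (neg b)) a = op (neg b) (op (neg a) a) := by ac_rfl
  rw [this, neg_op_self, op_one]

lemma odot_le_right (a b : A) : le (odot a b) b := by
  rw [odot_comm]; exact odot_le_left b a

lemma eq_zero_of_le_zero {a : A} (h : le a zero) : a = zero :=
  MVle_antisymm h (zero_le' a)

-- lub/glb
lemma le_ssup_right (a b : A) : le b (ssup a b) := le_op_right b _

lemma le_ssup_left (a b : A) : le a (ssup a b) := by
  rw [ssup_comm]; exact le_ssup_right b a

lemma ssup_mono_left {a b : A} (h : le a b) (c : A) : le (ssup a c) (ssup b c) := by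
  unfold ssup odot
  rw [neg_neg c]
  exact op_le_op_right (neg_le_neg (op_le_op_right (neg_le_neg h) c)) c

lemma ssup_le {a b c : A} (h1 : le a c) (h2 : le b c) : le (ssup a b) c := by
  have h3 : le (ssup a b) (ssup c b) := ssup_mono_left h1 b
  have h4 : ssup c b = c := by rw [ssup_comm]; exact ssup_eq_of_le h2
  rw [h4] at h3
  exact h3

lemma sinf_eq_neg_ssup (a b : A) : sinf a b = neg (ssup (neg a) (neg b)) := by
  unfold sinf ssup odot
  rw [neg_neg a, neg_neg b]

lemma sinf_comm (a b : A) : sinf a b = sinf b a := by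
  rw [sinf_eq_neg_ssup, sinf_eq_neg_ssup, ssup_comm]

lemma sinf_le_left (a b : A) : le (sinf a b) a := by
  rw [sinf_eq_neg_ssup]
  have := neg_le_neg (le_ssup_left (neg a) (neg b))
  rw [neg_neg] at this
  exact this

lemma sinf_le_right (a b : A) : le (sinf a b) b := by
  rw [sinf_comm]; exact sinf_le_left b a

lemma le_sinf {p a b : A} (h1 : le p a) (h2 : le p b) : le p (sinf a b) := by
  rw [sinf_eq_neg_ssup]
  have h3 : le (ssup (neg a) (neg b)) (neg p) := ssup_le (neg_le_neg h1) (neg_le_neg h2)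
  have := neg_le_neg h3
  rw [neg_neg] at this
  exact this

lemma leInf_iff_le {a b : A} : leInf a b ↔ le a b := by
  constructor
  · intro h
    have : le (sinf a b) b := sinf_le_right a b
    rw [h] at this
    exact this
  · intro h
    show sinf a b = a
    rw [sinf_eq_neg_ssup, ssup_comm, ssup_eq_of_le (neg_le_neg h), neg_neg]

end MV


namespace MV

variable {A : Type*} [MV A]

-- nsm lemmas
lemma nsm_zero (x : A) : nsm 0 x = zero := rfl
lemma nsm_succ (n : ℕ) (x : A) : nsm (n + 1) x = op x (nsm n x) := rfl
lemma nsm_one (x : A) : nsm 1 x = x := by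
  rw [nsm_succ, nsm_zero, op_zero]

lemma nsm_add (m n : ℕ) (x : A) : nsm (m + n) x = op (nsm m x) (nsm n x) := by
  induction m with
  | zero => rw [Nat.zero_add, nsm_zero, zero_op]
  | succ k ih =>
      have h : k + 1 + n = (k + n) + 1 := by omega
      rw [h, nsm_succ, ih, nsm_succ, op_assoc]

lemma nsm_le_nsm {m n : ℕ} (h : m ≤ n) (x : A) : le (nsm m x) (nsm n x) := by
  obtain ⟨k, hk⟩ := Nat.le.dest h
  rw [← hk, nsm_add]
  exact le_op_left _ _

lemma le_nsm {n : ℕ} (h : 1 ≤ n) (x : A) : le x (nsm n x) := by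
  have h2 := nsm_le_nsm h x
  rw [nsm_one] at h2
  exact h2

-- sq facts
lemma sq_zero_iff {x : A} : leInf x (neg x) ↔ sq x = zero := by
  rw [leInf_iff_le, le_iff_odot, neg_neg]
  exact Iff.rfl

lemma sq_neg (x : A) : sq (neg x) = neg (op x x) := by
  show neg (op (neg (neg x)) (neg (neg x))) = neg (op x x)
  rw [neg_neg x]

-- mu identities
lemma sinf_self_neg_eq (x : A) : sinf x (neg x) = odot (op x x) (neg x) := by
  unfold sinf
  rw [neg_neg]

lemma mu_op (x : A) : op (sinf x (neg x)) x = op x x := by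
  rw [sinf_self_neg_eq]
  show ssup (op x x) x = op x x
  rw [ssup_comm]
  exact ssup_eq_of_le (le_op_left x x)

lemma mu_op_sq (x : A) : op (sinf (neg x) x) (sq x) = x := by
  have h1 : sinf (neg x) x = neg (op (sq x) (neg x)) := rfl
  rw [h1, op_comm (sq x) (neg x), mv6 x (sq x)]
  rw [show neg (sq x) = op (neg x) (neg x) from neg_neg _]
  rw [op_assoc, neg_op_self, op_one, neg_one, zero_op]

lemma absorb_sq (x : A) : op (sq x) (op x x) = op x x := by
  have h1 : op (sq x) (op x x) = op (op (sinf x (neg x)) (sq x)) x := by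
    rw [← mu_op x]; ac_rfl
  rw [h1, sinf_comm, mu_op_sq]

lemma sinf_sq_sq_neg (x : A) : sinf (sq x) (sq (neg x)) = zero := by
  unfold sinf
  rw [sq_neg, neg_neg, absorb_sq]
  show odot (op x x) (neg (op x x)) = zero
  exact odot_neg_self _

-- subdistributivity: a ⊙ (b ⊕ c) ≤ b ⊕ (a ⊙ c)
lemma le_odot_iff {a b c : A} : le (odot a b) c ↔ le a (op (neg b) c) := by
  show (op (neg (odot a b)) c = one) ↔ (op (neg a) (op (neg b) c) = one)
  rw [neg_odot, op_assoc]

lemma odot_op_le (a b c : A) : le (odot a (op b c)) (op b (odot a c)) := by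
  rw [le_odot_iff]
  have s1 : le (neg c) (op (neg (op b c)) b) := by
    show op (neg (neg c)) (op (neg (op b c)) b) = one
    rw [neg_neg]
    have h : op c (op (neg (op b c)) b) = op (op b c) (neg (op b c)) := by ac_rfl
    rw [h, op_neg_self]
  have s2 : le a (op (neg c) (odot a c)) := by
    show op (neg a) (op (neg c) (odot a c)) = one
    rw [← op_assoc, ← neg_odot, neg_op_self]
  have s3 : le (op (neg c) (odot a c)) (op (op (neg (op b c)) b) (odot a c)) :=
    op_le_op_right s1 _
  have s4 := MVle_trans s2 s3
  have e : op (op (neg (op b c)) b) (odot a c) = op (neg (op b c)) (op b (odot a c)) := by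
    ac_rfl
  rw [e] at s4
  exact s4

-- key identity: x² ⊙ (x ⊕ x) = x²
lemma key_identity (x : A) : odot (sq x) (op x x) = sq x := by
  apply MVle_antisymm (odot_le_left _ _) ?h
  rw [le_iff_odot, neg_odot]
  have t1 : le (odot (sq x) (op (neg (sq x)) (neg (op x x)))) (sq x) := odot_le_left _ _
  have t2 : le (odot (sq x) (op (neg (sq x)) (neg (op x x)))) (sq (neg x)) := by
    have h := odot_op_le (sq x) (neg (op x x)) (neg (sq x))
    rw [odot_neg_self, op_zero, op_comm (neg (op x x)) (neg (sq x))] at h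
    rw [sq_neg]
    exact h
  have t3 := le_sinf t1 t2
  rw [sinf_sq_sq_neg] at t3
  exact eq_zero_of_le_zero t3

-- powers
def opw (x : A) : ℕ → A
  | 0 => one
  | n + 1 => odot x (opw x n)

lemma neg_nsm_neg (y : A) (k : ℕ) : neg (nsm k (neg y)) = opw y k := by
  induction k with
  | zero => rfl
  | succ n ih =>
      show neg (op (neg y) (nsm n (neg y))) = odot y (opw y n)
      rw [← ih]
      show _ = neg (op (neg y) (neg (neg (nsm n (neg y)))))
      rw [neg_neg]

lemma sq_odot_opw (x : A) (k : ℕ) : odot (sq x) (opw (op x x) k) = sq x := by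
  induction k with
  | zero => exact odot_one _
  | succ n ih =>
      show odot (sq x) (odot (op x x) (opw (op x x) n)) = sq x
      rw [← odot_assoc, key_identity]
      exact ih

lemma sq_eq_zero_of_opw {x : A} {k : ℕ} (h : opw (op x x) k = zero) : sq x = zero := by
  have h2 := sq_odot_opw x k
  rw [h, odot_zero] at h2
  exact h2.symm

-- part 1
lemma sq_nsm_two_pow (chang : ∀ y : A, op (sq y) (sq y) = sq (op y y)) {x : A}
    (hx : sq x = zero) : ∀ j : ℕ, sq (nsm (2 ^ j) x) = zero := by
  intro j
  induction j with
  | zero => rw [pow_zero, nsm_one]; exact hx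
  | succ n ih =>
      have h2 : (2:ℕ) ^ (n+1) = 2 ^ n + 2 ^ n := by rw [pow_succ]; omega
      rw [h2, nsm_add, ← chang, ih, op_zero]

lemma part1 (chang : ∀ y : A, op (sq y) (sq y) = sq (op y y)) {x : A}
    (hx : leInf x (neg x)) (n : ℕ) : leInf (nsm n x) (neg x) := by
  rw [leInf_iff_le]
  have hs : sq x = zero := sq_zero_iff.mp hx
  have h1 : le (nsm n x) (nsm (2 ^ n) x) := nsm_le_nsm (Nat.le_of_lt (Nat.lt_two_pow_self (n := n))) x
  have h2 : le (nsm (2 ^ n) x) (neg (nsm (2 ^ n) x)) :=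
    leInf_iff_le.mp (sq_zero_iff.mpr (sq_nsm_two_pow chang hs n))
  have h1n : 1 ≤ 2 ^ n := Nat.one_le_two_pow
  have h3 : le (neg (nsm (2 ^ n) x)) (neg x) := neg_le_neg (le_nsm h1n x)
  exact MVle_trans (MVle_trans h1 h2) h3

-- ideal helpers
lemma mem_of_le_mem {I : Set A} (hI : IsIdeal I) {a b : A} (h : le a b) (hb : b ∈ I) :
    a ∈ I :=
  hI.2.1 b hb a (leInf_iff_le.mpr h)

lemma ideal_univ_of_one_mem {I : Set A} (hI : IsIdeal I) (h : (one : A) ∈ I) :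
    I = Set.univ := by
  ext a
  simp only [Set.mem_univ, iff_true]
  exact mem_of_le_mem hI (le_one' a) h

lemma mem_max_of_small (chang : ∀ y : A, op (sq y) (sq y) = sq (op y y)) {M : Set A}
    (hM : IsMaximalIdeal M) {x : A} (hx : leInf x (neg x)) : x ∈ M := by
  have hMideal := hM.1
  set J : Set A := {a : A | ∃ m ∈ M, ∃ n : ℕ, le a (op m (nsm n x))} with hJdef
  have hJ : IsIdeal J := by
    refine ⟨⟨zero, hMideal.1, 0, zero_le' _⟩, ?_, ?_⟩
    · rintro b ⟨m, hm, n, hb⟩ y hy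
      exact ⟨m, hm, n, MVle_trans (leInf_iff_le.mp hy) hb⟩
    · rintro a ⟨m1, hm1, n1, ha⟩ b ⟨m2, hm2, n2, hb⟩
      refine ⟨op m1 m2, hMideal.2.2 m1 hm1 m2 hm2, n1 + n2, ?_⟩
      have h := op_le_op ha hb
      have e : op (op m1 (nsm n1 x)) (op m2 (nsm n2 x)) = op (op m1 m2) (nsm (n1+n2) x) := by
        rw [nsm_add]; ac_rfl
      rw [e] at h
      exact h
  have hxJ : x ∈ J := ⟨zero, hMideal.1, 1, by rw [nsm_one, zero_op]; exact MVle_refl x⟩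
  by_cases hJu : J = Set.univ
  · have h1 : (one : A) ∈ J := by rw [hJu]; trivial
    obtain ⟨m, hm, n, hle⟩ := h1
    have heq : op m (nsm n x) = one := MVle_antisymm (le_one' _) hle
    have hnm : le (neg (nsm n x)) m := by
      show op (neg (neg (nsm n x))) m = one
      rw [neg_neg, op_comm]
      exact heq
    have hmem : neg (nsm n x) ∈ M := mem_of_le_mem hMideal hnm hm
    have hxle : le x (neg (nsm n x)) := by
      have h2 : le (nsm n x) (neg x) := leInf_iff_le.mp (part1 chang hx n)
      have h3 := neg_le_neg h2
      rw [neg_neg] at h3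
      exact h3
    exact mem_of_le_mem hMideal hxle hmem
  · have hMsubJ : M ⊆ J := fun a ha =>
      ⟨a, ha, 0, by rw [nsm_zero, op_zero]; exact MVle_refl a⟩
    have hJM := hM.2.2 J hJ hJu hMsubJ
    rw [← hJM]
    exact hxJ

lemma exists_max_avoiding {x : A} (hx : sq x ≠ zero) :
    ∃ M : Set A, IsMaximalIdeal M ∧ x ∉ M := by
  set g : A := neg (op x x) with hgdef
  set I0 : Set A := {a : A | ∃ k : ℕ, le a (nsm k g)} with hI0def
  have hI0 : IsIdeal I0 := by
    refine ⟨⟨0, zero_le' _⟩, ?_, ?_⟩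
    · rintro b ⟨k, hb⟩ y hy
      exact ⟨k, MVle_trans (leInf_iff_le.mp hy) hb⟩
    · rintro a ⟨k1, ha⟩ b ⟨k2, hb⟩
      refine ⟨k1 + k2, ?_⟩
      have h := op_le_op ha hb
      rw [← nsm_add] at h
      exact h
  have hone : (one : A) ∉ I0 := by
    rintro ⟨k, hk⟩
    have heq : nsm k g = one := MVle_antisymm (le_one' _) hk
    have hng : neg (nsm k (neg (op x x))) = zero := by
      rw [← hgdef, heq, neg_one]
    rw [neg_nsm_neg] at hng
    exact hx (sq_eq_zero_of_opw hng)
  set S : Set (Set A) := {J | IsIdeal J ∧ I0 ⊆ J ∧ (one : A) ∉ J} with hSdef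
  have hI0S : I0 ∈ S := ⟨hI0, subset_rfl, hone⟩
  have hH : ∀ c ⊆ S, IsChain (· ⊆ ·) c → c.Nonempty → ∃ ub ∈ S, ∀ s ∈ c, s ⊆ ub := by
    intro c hcS hchain hcne
    obtain ⟨J0, hJ0⟩ := hcne
    refine ⟨⋃₀ c, ⟨⟨⟨J0, hJ0, (hcS hJ0).1.1⟩, ?_, ?_⟩, ?_, ?_⟩,
      fun s hs => Set.subset_sUnion_of_mem hs⟩
    · rintro b ⟨J, hJ, hbJ⟩ y hy
      exact ⟨J, hJ, (hcS hJ).1.2.1 b hbJ y hy⟩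
    · rintro a ⟨J1, hJ1, haJ⟩ b ⟨J2, hJ2, hbJ⟩
      rcases hchain.total hJ1 hJ2 with h | h
      · exact ⟨J2, hJ2, (hcS hJ2).1.2.2 a (h haJ) b hbJ⟩
      · exact ⟨J1, hJ1, (hcS hJ1).1.2.2 a haJ b (h hbJ)⟩
    · exact fun a ha => ⟨J0, hJ0, (hcS hJ0).2.1 ha⟩
    · rintro ⟨J, hJ, h1⟩
      exact (hcS hJ).2.2 h1
  obtain ⟨M, hsub, hMmax⟩ := zorn_subset_nonempty S hH I0 hI0S
  obtain ⟨hMideal, hMI0, hMone⟩ := hMmax.prop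
  refine ⟨M, ⟨hMideal, ?_, ?_⟩, ?_⟩
  · intro h
    apply hMone
    rw [h]
    trivial
  · intro J hJ hJuniv hMJ
    have hJS : J ∈ S := ⟨hJ, subset_trans hMI0 hMJ,
      fun h1 => hJuniv (ideal_univ_of_one_mem hJ h1)⟩
    exact Set.Subset.antisymm (hMmax.2 hJS hMJ) hMJ
  · intro hxM
    have h2x : op x x ∈ M := hMideal.2.2 x hxM x hxM
    have hgM : g ∈ M := hMI0 ⟨1, by rw [nsm_one]; exact MVle_refl g⟩
    have h1M : (one : A) ∈ M := by
      have h := hMideal.2.2 _ h2x _ hgM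
      rw [hgdef, op_neg_self] at h
      exact h
    exact hMone h1M

end MV


open MV in
/-- In an MV-algebra satisfying `2x² = (2x)²`: if `x ≤ ¬x` then `nx ≤ ¬x` for all `n`;
hence the radical equals `{x : x ≤ ¬x}`. -/
theorem chang_radical_eq {A : Type*} [MV A]
    (chang : ∀ x : A, op (sq x) (sq x) = sq (op x x)) :
    (∀ x : A, leInf x (neg x) → ∀ n : ℕ, leInf (nsm n x) (neg x)) ∧
    rad A = {x : A | leInf x (neg x)} := by
  constructor
  · intro x hx n
    exact part1 chang hx n
  · ext x
    simp only [Set.mem_setOf_eq]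
    constructor
    · intro hx
      by_contra h
      have hsq : sq x ≠ zero := fun hz => h (sq_zero_iff.mpr hz)
      obtain ⟨M, hMmax, hxM⟩ := exists_max_avoiding hsq
      exact hxM (Set.mem_sInter.mp hx M hMmax)
    · intro hx
      apply Set.mem_sInter.mpr
      intro I hI
      exact mem_max_of_small chang hI hx
end

section
/- In any MV-algebra, the family of axioms {2x² = (2x)², the Boolean condition 2(2x)² = (2x)², and the implication (x⊕x = x ⟹ x = 0 ∨ x = 1)} is equivalent to the family {2x² = (2x)², and the disjunction (x ≤ ¬x ∨ ¬x ≤ x) for all x}. -/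
namespace MV

variable {A : Type*} [MV A]

lemma negone : (neg one : A) = zero := neg_neg zero

lemma eq_zero_of_op_self {a : A} (h : op a a = zero) : a = zero := by
  have h2 : op (op (neg a) a) a = op (neg a) (op a a) := op_assoc _ _ _
  rw [neg_op_self, h, op_zero, one_op] at h2
  rw [← neg_neg a, ← h2, negone]

end MV

open MV in
/-- The axiom family `{2x² = (2x)², 2(2x)² = (2x)², (x ⊕ x = x → x = 0 ∨ x = 1)}`
is equivalent, in any MV-algebra, to `{2x² = (2x)², (x ≤ ¬x ∨ ¬x ≤ x)}`. -/
theorem perfect_axiomatizations_equivalent {A : Type*} [MV A] :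
    ((∀ x : A, op (sq x) (sq x) = sq (op x x)) ∧
     (∀ x : A, op (sq (op x x)) (sq (op x x)) = sq (op x x)) ∧
     (∀ x : A, op x x = x → x = zero ∨ x = one))
    ↔
    ((∀ x : A, op (sq x) (sq x) = sq (op x x)) ∧
     (∀ x : A, le x (neg x) ∨ le (neg x) x)) := by
  constructor
  · rintro ⟨h1, h2, h3⟩
    refine ⟨h1, fun x => ?_⟩
    rcases h3 _ (h2 x) with h0 | h0
    · left
      have hs : op (sq x) (sq x) = zero := by rw [h1, h0]
      have hz : MV.sq x = zero := eq_zero_of_op_self hs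
      unfold MV.sq odot at hz
      have hz' := congrArg neg hz
      rw [MV.neg_neg] at hz'
      exact hz'
    · right
      unfold MV.sq odot at h0
      have h0' := congrArg neg h0
      rw [MV.neg_neg, negone] at h0'
      have hz : neg (op x x) = zero := eq_zero_of_op_self h0'
      have hz' := congrArg neg hz
      rw [MV.neg_neg] at hz'
      unfold le
      rw [MV.neg_neg, hz']
      rfl
  · rintro ⟨h1, ht⟩
    refine ⟨h1, fun x => ?_, fun x hx => ?_⟩
    · rcases ht x with h | h
      · unfold le at h
        have hsq : MV.sq x = zero := by unfold MV.sq odot; rw [h, negone]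
        have h2x : MV.sq (op x x) = zero := by rw [← h1, hsq, op_zero]
        rw [h2x, op_zero]
      · unfold le at h
        rw [MV.neg_neg] at h
        have hsq : MV.sq (op x x) = one := by
          unfold MV.sq odot; rw [h, negone, op_zero]; rfl
        rw [hsq, op_one]
    · rcases ht x with h | h
      · left
        unfold le at h
        have h6 := mv6 x (neg x)
        rw [h, negone, zero_op, MV.neg_neg, hx, neg_op_self] at h6
        rw [← MV.neg_neg x, h6]; exact negone
      · right
        unfold le at h
        rw [MV.neg_neg, hx] at h
        exact h
end

section
/- Let A be a perfect MV-algebra. Then the radical Rad(A) = {x ∈ A : x ≤ ¬x}, equipped with the restrictions of ⊕, ≤, inf, sup, and 0, is a cancellative lattice-ordered abelian monoid: in particular, if x, y, a ∈ Rad(A) and x ⊕ a = y ⊕ a, then x = y. -/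
namespace MV

/-- A perfect MV-algebra: nontrivial, satisfying `x² ⊕ x² = (x ⊕ x)²` and,
for every `x`, either `x ≤ ¬x` or `¬x ≤ x`. -/
def Perfect (A : Type*) [MV A] : Prop :=
  (zero : A) ≠ one ∧
  (∀ x : A, op (sq x) (sq x) = sq (op x x)) ∧
  (∀ x : A, le x (neg x) ∨ le (neg x) x)

end MV

namespace MVAux

open MV

variable {A : Type*} [MV A]

private instance : AddCommMonoid A where
  add := op
  zero := MV.zero
  add_assoc := op_assoc
  add_comm := op_comm
  add_zero := op_zero
  zero_add x := (op_comm _ x).trans (op_zero x)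
  nsmul := fun n x => MV.nsm n x
  nsmul_zero := fun _ => rfl
  nsmul_succ := fun n x => op_comm x (MV.nsm n x)

lemma op_eq_add (x y : A) : op x y = x + y := rfl

lemma neg_inj {x y : A} (h : neg x = neg y) : x = y := by
  rw [← MV.neg_neg x, h, MV.neg_neg]

lemma op_one (x : A) : op x one = one := op_neg_zero x

lemma one_op (x : A) : op one x = one := (op_comm _ _).trans (op_one x)

lemma zero_op (x : A) : op zero x = x := (op_comm _ _).trans (op_zero x)

lemma neg_one : (neg one : A) = zero := MV.neg_neg _

lemma neg_op_self (x : A) : op (neg x) x = one := by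
  have h := mv6 x (one : A)
  simp only [op_one, neg_one, zero_op] at h
  exact h.symm

lemma le_refl (x : A) : le x x := neg_op_self x

lemma le_top (x : A) : le x one := op_one _

lemma bot_le (x : A) : le zero x := by
  show op (neg zero) x = one
  exact one_op x

/-- If `x ≤ y` then `¬(¬y ⊕ x) ⊕ x = y`. -/
lemma ssup_absorb {x y : A} (h : le x y) : op (neg (op (neg y) x)) x = y := by
  have h6 := mv6 x y
  rw [show op (neg x) y = one from h, neg_one, zero_op] at h6
  exact h6.symm

lemma le_antisymm {x y : A} (h1 : le x y) (h2 : le y x) : x = y := by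
  have h := ssup_absorb h2
  rw [show op (neg x) y = one from h1, neg_one, zero_op] at h
  exact h.symm

lemma le_trans {x y z : A} (h1 : le x y) (h2 : le y z) : le x z := by
  have h := ssup_absorb h2
  show op (neg x) z = one
  rw [← h, show op (neg x) (op (neg (op (neg z) y)) y)
      = op (neg (op (neg z) y)) (op (neg x) y) from by
    simp only [op_eq_add]; abel]
  rw [show op (neg x) y = one from h1, op_one]

lemma neg_le_neg {x y : A} (h : le x y) : le (neg y) (neg x) := by
  show op (neg (neg y)) (neg x) = one
  rw [MV.neg_neg, op_comm]
  exact h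

lemma neg_le_of_neg_le {b s : A} (h : le (neg b) s) : le (neg s) b := by
  have h' : op (neg (neg b)) s = one := h
  rw [MV.neg_neg] at h'
  show op (neg (neg s)) b = one
  rw [MV.neg_neg, op_comm]
  exact h'

lemma le_neg_swap {s z : A} (h : le s (neg z)) : le z (neg s) := by
  show op (neg z) (neg s) = one
  rw [op_comm]
  exact h

lemma le_op_self (x y : A) : le x (op x y) := by
  show op (neg x) (op x y) = one
  rw [show op (neg x) (op x y) = op y (op (neg x) x) from by
    simp only [op_eq_add]; abel, neg_op_self, op_one]

lemma le_op_self' (x y : A) : le x (op y x) := by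
  rw [op_comm]; exact le_op_self x y

lemma mono_op_right {x y : A} (t : A) (h : le x y) : le (op t x) (op t y) := by
  have h8 := ssup_absorb h
  show op (neg (op t x)) (op t y) = one
  rw [← h8, show op (neg (op t x)) (op t (op (neg (op (neg y) x)) x))
      = op (neg (op (neg y) x)) (op (neg (op t x)) (op t x)) from by
    simp only [op_eq_add]; abel, neg_op_self, op_one]

lemma mono_op_left {x y : A} (t : A) (h : le x y) : le (op x t) (op y t) := by
  rw [op_comm x t, op_comm y t]; exact mono_op_right t h

lemma mono_odot {x y s t : A} (h1 : le x y) (h2 : le s t) :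
    le (odot x s) (odot y t) := by
  show le (neg (op (neg x) (neg s))) (neg (op (neg y) (neg t)))
  apply neg_le_neg
  exact le_trans (mono_op_left _ (neg_le_neg h1)) (mono_op_right _ (neg_le_neg h2))

lemma ssup_def (x y : A) : ssup x y = op (neg (op (neg x) y)) y := by
  simp only [ssup, odot, MV.neg_neg]

lemma ssup_comm (x y : A) : ssup x y = ssup y x := by
  rw [ssup_def, ssup_def]; exact mv6 x y

lemma le_ssup_right (x y : A) : le y (ssup x y) := by
  rw [ssup_def]
  show op (neg y) (op (neg (op (neg x) y)) y) = one
  rw [show op (neg y) (op (neg (op (neg x) y)) y)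
      = op (neg (op (neg x) y)) (op (neg y) y) from by
    simp only [op_eq_add]; abel, neg_op_self, op_one]

lemma le_ssup_left (x y : A) : le x (ssup x y) := by
  rw [ssup_comm]; exact le_ssup_right y x

lemma ssup_of_le {y z : A} (h : le y z) : ssup z y = z := by
  rw [ssup_def]; exact ssup_absorb h

lemma ssup_le {x y z : A} (hx : le x z) (hy : le y z) : le (ssup x y) z := by
  have h1 : le (ssup x y) (ssup z y) := mono_op_left y (mono_odot hx (le_refl _))
  rwa [ssup_of_le hy] at h1

lemma sinf_neg (x y : A) : sinf x y = neg (ssup (neg x) (neg y)) := by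
  simp only [sinf, ssup, odot, MV.neg_neg]

lemma sinf_le_left (x y : A) : le (sinf x y) x := by
  rw [sinf_neg]
  exact neg_le_of_neg_le (le_ssup_left (neg x) (neg y))

lemma sinf_le_right (x y : A) : le (sinf x y) y := by
  rw [sinf_neg]
  exact neg_le_of_neg_le (le_ssup_right (neg x) (neg y))

lemma le_sinf {x y z : A} (hx : le z x) (hy : le z y) : le z (sinf x y) := by
  rw [sinf_neg]
  exact le_neg_swap (ssup_le (neg_le_neg hx) (neg_le_neg hy))

/-- Radical membership. -/
lemma sq_eq_zero {x : A} (hx : le x (neg x)) : sq x = zero := by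
  show neg (op (neg x) (neg x)) = zero
  rw [show op (neg x) (neg x) = one from hx, neg_one]

lemma mem_of_sq_eq_zero {x : A} (hx : sq x = zero) : le x (neg x) := by
  show op (neg x) (neg x) = one
  apply neg_inj
  rw [show neg (op (neg x) (neg x)) = sq x from rfl, hx, neg_one]

lemma mem_of_le {x z : A} (h : le z x) (hx : le x (neg x)) : le z (neg z) :=
  le_trans h (le_trans hx (neg_le_neg h))

section Perfect

variable (hA : Perfect A)
include hA

lemma no_fix {x : A} (hx : le x (neg x)) (h : le (neg x) x) : False := by
  obtain ⟨h1, h2, -⟩ := id hA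
  have hxx : op x x = one := by
    have h' : op (neg (neg x)) x = one := h
    rwa [MV.neg_neg] at h'
  have h2x := h2 x
  rw [sq_eq_zero hx, op_zero, hxx] at h2x
  have hs1 : sq (one : A) = one := by
    show neg (op (neg one) (neg one)) = one
    rw [neg_one, op_zero]
    rfl
  exact h1 (h2x.trans hs1)

lemma two_mem {x : A} (hx : le x (neg x)) : le (op x x) (neg (op x x)) := by
  obtain ⟨-, h2, -⟩ := id hA
  apply mem_of_sq_eq_zero
  rw [← h2, sq_eq_zero hx, op_zero]

lemma radical_op_mem {x y : A} (hx : le x (neg x)) (hy : le y (neg y)) :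
    le (op x y) (neg (op x y)) := by
  obtain ⟨-, -, h3⟩ := id hA
  rcases h3 (op x y) with h | h
  · exact h
  · exfalso
    have hsum : op (op x y) (op x y) = one := by
      have h' : op (neg (neg (op x y))) (op x y) = one := h
      rwa [MV.neg_neg] at h'
    have hsum' : op (op x x) (op y y) = one := by
      rw [show op (op x x) (op y y) = op (op x y) (op x y) from by
        simp only [op_eq_add]; abel, hsum]
    have hx2 := two_mem hA hx
    have hy2 := two_mem hA hy
    have hle1 : le (neg (op x x)) (op y y) := by
      show op (neg (neg (op x x))) (op y y) = one
      rw [MV.neg_neg]; exact hsum'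
    have hle2 : le (neg (op y y)) (op x x) := by
      show op (neg (neg (op y y))) (op x x) = one
      rw [MV.neg_neg, op_comm]; exact hsum'
    exact no_fix hA hx2 (le_trans (le_trans hle1 hy2) hle2)

end Perfect

/-- Key cancellation identity: if `x ≤ ¬a` then `(x ⊕ a) ⊙ ¬a = x`. -/
lemma cancel_key {x a : A} (h : le x (neg a)) : odot (op x a) (neg a) = x := by
  show neg (op (neg (op x a)) (neg (neg a))) = x
  rw [MV.neg_neg]
  have h6 := mv6 (neg x) a
  rw [MV.neg_neg] at h6
  rw [show op (neg a) (neg x) = one from by rw [op_comm]; exact h, neg_one,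
    zero_op] at h6
  rw [h6, MV.neg_neg]

end MVAux


open MV in
/-- In a perfect MV-algebra `A`, the radical `R = {x : x ≤ ¬x}` with the restrictions of
`⊕`, `≤`, `inf`, `sup`, `0` is a cancellative lattice-ordered abelian monoid; in
particular `x ⊕ a = y ⊕ a` implies `x = y` for `x, y, a` in the radical. -/
theorem perfect_radical_cancellative_lmonoid {A : Type*} [MV A] (hA : Perfect A) :
    let R : Set A := {x : A | le x (neg x)}
    -- closure of the radical under the operations
    ((zero : A) ∈ R) ∧
    (∀ x ∈ R, ∀ y ∈ R, op x y ∈ R) ∧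
    (∀ x ∈ R, ∀ y ∈ R, sinf x y ∈ R) ∧
    (∀ x ∈ R, ∀ y ∈ R, ssup x y ∈ R) ∧
    -- abelian monoid laws
    (∀ x ∈ R, ∀ y ∈ R, ∀ z ∈ R, op (op x y) z = op x (op y z)) ∧
    (∀ x ∈ R, ∀ y ∈ R, op x y = op y x) ∧
    (∀ x ∈ R, op x zero = x) ∧
    -- partial order
    (∀ x ∈ R, le x x) ∧
    (∀ x ∈ R, ∀ y ∈ R, le x y → le y x → x = y) ∧
    (∀ x ∈ R, ∀ y ∈ R, ∀ z ∈ R, le x y → le y z → le x z) ∧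
    -- lattice: `sinf` is the infimum and `ssup` the supremum
    (∀ x ∈ R, ∀ y ∈ R, le (sinf x y) x ∧ le (sinf x y) y ∧
      ∀ z ∈ R, le z x → le z y → le z (sinf x y)) ∧
    (∀ x ∈ R, ∀ y ∈ R, le x (ssup x y) ∧ le y (ssup x y) ∧
      ∀ z ∈ R, le x z → le y z → le (ssup x y) z) ∧
    -- translation invariance
    (∀ x ∈ R, ∀ y ∈ R, ∀ t ∈ R, le x y → le (op t x) (op t y)) ∧
    -- cancellation
    (∀ x ∈ R, ∀ y ∈ R, ∀ a ∈ R, op x a = op y a → x = y) := by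
  
  intro R
  have memR : ∀ x : A, x ∈ R ↔ le x (neg x) := fun x => Iff.rfl
  obtain ⟨h1, h2, h3⟩ := hA
  have hA' : Perfect A := ⟨h1, h2, h3⟩
  refine ⟨?_, ?_, ?_, ?_, ?_, ?_, ?_, ?_, ?_, ?_, ?_, ?_, ?_, ?_⟩
  · -- zero ∈ R
    show le zero (neg zero)
    exact MVAux.op_one one
  · -- closure under op
    intro x hx y hy
    exact MVAux.radical_op_mem hA' hx hy
  · -- closure under sinf
    intro x hx y hy
    exact MVAux.mem_of_le (MVAux.sinf_le_left x y) hx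
  · -- closure under ssup
    intro x hx y hy
    exact MVAux.mem_of_le (MVAux.ssup_le (MVAux.le_op_self x y) (MVAux.le_op_self' y x))
      (MVAux.radical_op_mem hA' hx hy)
  · -- associativity
    intro x _ y _ z _
    exact op_assoc x y z
  · -- commutativity
    intro x _ y _
    exact op_comm x y
  · -- right unit
    intro x _
    exact op_zero x
  · -- reflexivity
    intro x _
    exact MVAux.le_refl x
  · -- antisymmetry
    intro x _ y _ h1 h2
    exact MVAux.le_antisymm h1 h2
  · -- transitivity
    intro x _ y _ z _ h1 h2
    exact MVAux.le_trans h1 h2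
  · -- sinf is the infimum
    intro x _ y _
    exact ⟨MVAux.sinf_le_left x y, MVAux.sinf_le_right x y, fun z _ hzx hzy => MVAux.le_sinf hzx hzy⟩
  · -- ssup is the supremum
    intro x _ y _
    exact ⟨MVAux.le_ssup_left x y, MVAux.le_ssup_right x y, fun z _ hxz hyz => MVAux.ssup_le hxz hyz⟩
  · -- translation invariance
    intro x _ y _ t _ h
    exact MVAux.mono_op_right t h
  · -- cancellation
    intro x hx y hy a ha h
    have hxa : le x (neg a) :=
      MVAux.le_trans (MVAux.le_op_self x a)
        (MVAux.le_trans (MVAux.radical_op_mem hA' hx ha) (MVAux.neg_le_neg (MVAux.le_op_self' a x)))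
    have hya : le y (neg a) :=
      MVAux.le_trans (MVAux.le_op_self y a)
        (MVAux.le_trans (MVAux.radical_op_mem hA' hy ha) (MVAux.neg_le_neg (MVAux.le_op_self' a y)))
    calc x = odot (op x a) (neg a) := (MVAux.cancel_key hxa).symm
    _ = odot (op y a) (neg a) := by rw [h]
    _ = y := MVAux.cancel_key hya
end
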